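/- arXiv:2407.15471 — 5 statements merged into one kernel-verified Lean document; each statement's English description precedes it below -/
import Mathlib

section
/- Let (u_n) be a positive sequence, γ > 1, and (w_n) a positive sequence satisfying u_{n+1} − u_n ≤ −w_n u_n^γ for all n. Then for all n, u_n ≤ ( u_0^{1−γ} + (γ−1) Σ_{k=0}^{n−1} w_k )^{−1/(γ−1)}. -/
open Real

/-- Bernoulli-type inequality with negative exponent: for `0 < x < 1` and `0 < q`,
`1 + q*x ≤ (1-x)^(-q)`. -/
lemma bernoulli_neg_aux {x q : ℝ} (hx0 : 0 < x) (hx1 : x < 1) (hq : 0 < q) :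
    1 + q * x ≤ (1 - x) ^ (-q) := by
  have h1x : (0:ℝ) < 1 - x := by linarith
  rcases le_or_gt 1 q with hq1 | hq1
  · -- q ≥ 1 : use Bernoulli on (1 + s)^q with s = x/(1-x)
    have hs : (0:ℝ) < x / (1 - x) := div_pos hx0 h1x
    have hB : 1 + q * (x / (1 - x)) ≤ (1 + x / (1 - x)) ^ q :=
      one_add_mul_self_le_rpow_one_add (by linarith) hq1
    have hbase : 1 + x / (1 - x) = (1 - x)⁻¹ := by field_simp; ring
    have hxs : x ≤ x / (1 - x) := by
      rw [le_div_iff₀ h1x]; nlinarith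
    calc 1 + q * x ≤ 1 + q * (x / (1 - x)) := by nlinarith
      _ ≤ (1 + x / (1 - x)) ^ q := hB
      _ = (1 - x) ^ (-q) := by
          rw [hbase, ← Real.rpow_neg_one (1 - x), ← Real.rpow_mul h1x.le]
          ring_nf
  · -- 0 < q < 1 : use (1-x)^q ≤ 1 - q*x and (1+qx)(1-qx) ≤ 1
    have hB : (1 + (-x)) ^ q ≤ 1 + q * (-x) :=
      rpow_one_add_le_one_add_mul_self (by linarith) hq.le hq1.le
    have h2 : (1 - x) ^ q ≤ 1 - q * x := by
      simpa [sub_eq_add_neg, mul_neg] using hB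
    have hqx : 0 < 1 - q * x := by nlinarith
    have hpos : 0 < (1 - x) ^ q := Real.rpow_pos_of_pos h1x q
    have hmul : (1 + q * x) * (1 - x) ^ q ≤ 1 := by
      nlinarith [mul_le_mul_of_nonneg_left h2 (show (0:ℝ) ≤ 1 + q * x by nlinarith), sq_nonneg (q * x)]
    rw [Real.rpow_neg h1x.le, inv_eq_one_div, le_div_iff₀ hpos]
    nlinarith

theorem gronwall_one_step_power (u w : ℕ → ℝ) (γ : ℝ) (hγ : 1 < γ)
    (hu : ∀ n, 0 < u n) (hw : ∀ n, 0 < w n)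
    (hrec : ∀ n, u (n + 1) - u n ≤ -(w n * u n ^ γ)) :
    ∀ n, u n ≤ (u 0 ^ (1 - γ) +
      (γ - 1) * ∑ k ∈ Finset.range n, w k) ^ (-(1 / (γ - 1))) := by
  have hγ1 : 0 < γ - 1 := by linarith
  -- step inequality for v n = u n ^ (1 - γ)
  have hstep : ∀ n, u n ^ (1 - γ) + (γ - 1) * w n ≤ u (n + 1) ^ (1 - γ) := by
    intro n
    have hun := hu n
    have hun1 := hu (n + 1)
    have hwn := hw n
    have hub : u (n + 1) ≤ u n - w n * u n ^ γ := by linarith [hrec n]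
    have hpos : 0 < u n - w n * u n ^ γ := lt_of_lt_of_le hun1 hub
    -- write u n - w n * u n ^ γ = u n * (1 - x) with x = w n * u n ^ (γ - 1)
    set x := w n * u n ^ (γ - 1) with hxdef
    have hx0 : 0 < x := mul_pos hwn (Real.rpow_pos_of_pos hun _)
    have hfac : u n - w n * u n ^ γ = u n * (1 - x) := by
      rw [hxdef]
      have : u n ^ γ = u n * u n ^ (γ - 1) := by
        rw [← Real.rpow_one_add' hun.le (show (1:ℝ) + (γ - 1) ≠ 0 by intro h; linarith [h])]; ring_nf
      rw [this]; ring
    have hx1 : x < 1 := by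
      by_contra h
      push_neg at h
      have : u n * (1 - x) ≤ 0 := mul_nonpos_of_nonneg_of_nonpos hun.le (by linarith)
      rw [hfac] at hpos; linarith
    have h1x : (0:ℝ) < 1 - x := by linarith
    -- antitone
    have hmono : (u n - w n * u n ^ γ) ^ (1 - γ) ≤ u (n + 1) ^ (1 - γ) :=
      Real.rpow_le_rpow_of_nonpos hun1 hub (by linarith)
    have hbern : 1 + (γ - 1) * x ≤ (1 - x) ^ (-(γ - 1)) :=
      bernoulli_neg_aux hx0 hx1 hγ1
    have hexpand : (u n - w n * u n ^ γ) ^ (1 - γ)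
        = u n ^ (1 - γ) * (1 - x) ^ (-(γ - 1)) := by
      rw [hfac, Real.mul_rpow hun.le h1x.le]
      congr 1
      congr 1
      ring
    have hv : 0 < u n ^ (1 - γ) := Real.rpow_pos_of_pos hun _
    have hkey : u n ^ (1 - γ) + (γ - 1) * w n ≤ u n ^ (1 - γ) * (1 - x) ^ (-(γ - 1)) := by
      have h2 : u n ^ (1 - γ) * (1 + (γ - 1) * x) ≤ u n ^ (1 - γ) * (1 - x) ^ (-(γ - 1)) :=
        mul_le_mul_of_nonneg_left hbern hv.le
      refine le_trans ?_ h2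
      have : u n ^ (1 - γ) * x = w n := by
        rw [hxdef, ← mul_assoc, mul_comm (u n ^ (1-γ)) (w n), mul_assoc,
          ← Real.rpow_add hun]
        norm_num
      nlinarith [this]
    calc u n ^ (1 - γ) + (γ - 1) * w n
        ≤ u n ^ (1 - γ) * (1 - x) ^ (-(γ - 1)) := hkey
      _ = (u n - w n * u n ^ γ) ^ (1 - γ) := hexpand.symm
      _ ≤ u (n + 1) ^ (1 - γ) := hmono
  -- induction
  have hsum : ∀ n, u 0 ^ (1 - γ) + (γ - 1) * ∑ k ∈ Finset.range n, w k ≤ u n ^ (1 - γ) := by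
    intro n
    induction n with
    | zero => simp
    | succ n ih =>
        rw [Finset.sum_range_succ]
        have := hstep n
        nlinarith
  intro n
  have hS : 0 < u 0 ^ (1 - γ) + (γ - 1) * ∑ k ∈ Finset.range n, w k := by
    have : 0 ≤ ∑ k ∈ Finset.range n, w k :=
      Finset.sum_nonneg fun k _ => (hw k).le
    nlinarith [Real.rpow_pos_of_pos (hu 0) (1 - γ)]
  have := Real.rpow_le_rpow_of_nonpos hS (hsum n)
    (z := -(1 / (γ - 1))) (neg_nonpos.mpr (by positivity))
  calc u n = (u n ^ (1 - γ)) ^ (-(1 / (γ - 1))) := by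
        rw [← Real.rpow_mul (hu n).le]
        rw [show (1 - γ) * -(1 / (γ - 1)) = 1 by field_simp; ring]
        exact (Real.rpow_one _).symm
    _ ≤ _ := this
end

section
/- Let R : ℝ^N → ℝ be differentiable with gradient L-Lipschitz on a set containing the segment from θ to θ_η, where for η with 0 < η ≤ 1/β̄, λ ∈ (0,1), ε_a > 0, and s, s_η ∈ ℝ^N defined componentwise by s_η = (1 − β̄η) s + β̄η (∇R(θ))², s ≥ 0, and θ_η = θ − η ∇R(θ)/(ε_a + √s_η) (componentwise division). If additionally η ≤ 2ε_a(1−λ)/L, then R(θ_η) − R(θ) ≤ −λ η Σ_{i=1}^N (∂_i R(θ))² / (ε_a + √(s_η^i)). -/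
open scoped RealInnerProductSpace

lemma descent_lemma {F : Type*} [NormedAddCommGroup F] [InnerProductSpace ℝ F]
    [CompleteSpace F] (f : F → ℝ) (hf : Differentiable ℝ f) (L : ℝ) (hL : 0 ≤ L)
    (hLip : ∀ x y, ‖gradient f x - gradient f y‖ ≤ L * ‖x - y‖) (x y : F) :
    f y - f x ≤ ⟪gradient f x, y - x⟫ + L / 2 * ‖y - x‖ ^ 2 := by
  set v := y - x with hv
  -- gradient is continuous
  have hgradLip : LipschitzWith L.toNNReal (gradient f) := by
    apply LipschitzWith.of_dist_le_mul
    intro a b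
    simpa [dist_eq_norm, Real.coe_toNNReal L hL] using hLip a b
  set g : ℝ → ℝ := fun t => f (x + t • v) with hg
  have hline : ∀ t : ℝ, HasDerivAt (fun t : ℝ => x + t • v) v t := by
    intro t
    simpa using ((hasDerivAt_id t).smul_const v).const_add x
  have hgd : ∀ t : ℝ, HasDerivAt g ⟪gradient f (x + t • v), v⟫ t := by
    intro t
    have h1 := (hf (x + t • v)).hasGradientAt
    have := h1.hasFDerivAt.comp_hasDerivAt t (hline t)
    simpa [InnerProductSpace.toDual_apply_apply, Function.comp_def, hg] using this
  have hcont : Continuous fun t : ℝ => ⟪gradient f (x + t • v), v⟫ := by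
    apply Continuous.inner
    · exact hgradLip.continuous.comp (by continuity)
    · exact continuous_const
  have hint : g 1 - g 0 = ∫ t in (0:ℝ)..1, ⟪gradient f (x + t • v), v⟫ := by
    rw [intervalIntegral.integral_eq_sub_of_hasDerivAt (fun t _ => hgd t)
      (hcont.intervalIntegrable 0 1)]
  have hbound : ∀ t ∈ Set.Icc (0:ℝ) 1,
      ⟪gradient f (x + t • v), v⟫ ≤ ⟪gradient f x, v⟫ + L * t * ‖v‖ ^ 2 := by
    intro t ht
    have h1 : ⟪gradient f (x + t • v) - gradient f x, v⟫ ≤ L * t * ‖v‖ ^ 2 := by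
      calc ⟪gradient f (x + t • v) - gradient f x, v⟫
          ≤ ‖gradient f (x + t • v) - gradient f x‖ * ‖v‖ := real_inner_le_norm _ _
        _ ≤ (L * ‖x + t • v - x‖) * ‖v‖ :=
            mul_le_mul_of_nonneg_right (hLip _ _) (norm_nonneg _)
        _ = L * t * ‖v‖ ^ 2 := by
            rw [add_sub_cancel_left, norm_smul, Real.norm_eq_abs, abs_of_nonneg ht.1]; ring
    have := inner_sub_left (𝕜 := ℝ) (gradient f (x + t • v)) (gradient f x) v
    linarith [this ▸ h1]
  have hineq : (∫ t in (0:ℝ)..1, ⟪gradient f (x + t • v), v⟫)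
      ≤ ∫ t in (0:ℝ)..1, (⟪gradient f x, v⟫ + L * t * ‖v‖ ^ 2) := by
    apply intervalIntegral.integral_mono_on zero_le_one
      (hcont.intervalIntegrable 0 1) (by apply Continuous.intervalIntegrable; continuity)
    exact hbound
  have hval : (∫ t in (0:ℝ)..1, (⟪gradient f x, v⟫ + L * t * ‖v‖ ^ 2))
      = ⟪gradient f x, v⟫ + L / 2 * ‖v‖ ^ 2 := by
    rw [intervalIntegral.integral_add (by apply Continuous.intervalIntegrable; continuity)
      (by apply Continuous.intervalIntegrable; continuity)]
    have h3 : (∫ t in (0:ℝ)..1, L * t * ‖v‖ ^ 2) = L / 2 * ‖v‖ ^ 2 := by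
      have he : (fun t : ℝ => L * t * ‖v‖ ^ 2) = fun t : ℝ => (L * ‖v‖ ^ 2) * t := by
        funext t; ring
      rw [he, intervalIntegral.integral_const_mul, integral_id]; ring
    rw [h3]; simp
  have hg0 : g 0 = f x := by simp [hg]
  have hg1 : g 1 = f y := by simp [hg, hv]
  rw [← hg1, ← hg0]
  linarith [hint, hineq, hval ▸ hineq]

theorem rmsprop_descent (N : ℕ) (R : EuclideanSpace ℝ (Fin N) → ℝ)
    (hR : Differentiable ℝ R) (L : ℝ) (hL : 0 < L)
    (hLip : ∀ x y, ‖gradient R x - gradient R y‖ ≤ L * ‖x - y‖)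
    (βb lam ε η : ℝ) (hβ : 0 < βb) (hlam0 : 0 < lam) (hlam1 : lam < 1)
    (hε : 0 < ε) (hη : 0 < η) (hη1 : η ≤ 1 / βb) (hη2 : η ≤ 2 * ε * (1 - lam) / L)
    (θ θη : EuclideanSpace ℝ (Fin N)) (s sη : Fin N → ℝ)
    (hs : ∀ i, 0 ≤ s i)
    (hsη : ∀ i, sη i = (1 - βb * η) * s i + βb * η * (gradient R θ i) ^ 2)
    (hθη : ∀ i, θη i = θ i - η * gradient R θ i / (ε + Real.sqrt (sη i))) :
    R θη - R θ ≤ -(lam * η * ∑ i, (gradient R θ i) ^ 2 / (ε + Real.sqrt (sη i))) := by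
  have hd : ∀ i, ε ≤ ε + Real.sqrt (sη i) :=
    fun i => le_add_of_nonneg_right (Real.sqrt_nonneg _)
  have hkey := descent_lemma R hR L hL.le hLip θ θη
  have hinner : ⟪gradient R θ, θη - θ⟫ = ∑ i, gradient R θ i * (θη i - θ i) := by
    rw [PiLp.inner_apply]
    exact Finset.sum_congr rfl (fun i _ => by simp [RCLike.inner_apply, mul_comm])
  have hnorm : ‖θη - θ‖ ^ 2 = ∑ i, (θη i - θ i) ^ 2 := by
    rw [← real_inner_self_eq_norm_sq, PiLp.inner_apply]
    exact Finset.sum_congr rfl (fun i _ => by simp [RCLike.inner_apply])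
  have hcomp : ∀ i, gradient R θ i * (θη i - θ i) + L / 2 * (θη i - θ i) ^ 2 ≤
      -(lam * η * ((gradient R θ i) ^ 2 / (ε + Real.sqrt (sη i)))) := by
    intro i
    have hvi : θη i - θ i = -(η * gradient R θ i / (ε + Real.sqrt (sη i))) := by
      rw [hθη i]; ring
    rw [hvi]
    set d := ε + Real.sqrt (sη i) with hdd
    have hd0 : 0 < d := lt_of_lt_of_le hε (hd i)
    set g := gradient R θ i with hgg
    have hLη : L * η ≤ 2 * ε * (1 - lam) := by
      rw [le_div_iff₀ hL] at hη2; linarith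
    have e : g * -(η * g / d) + L / 2 * (-(η * g / d)) ^ 2 + lam * η * (g ^ 2 / d)
        = (η * g ^ 2) * (L * η / 2 + (lam - 1) * d) / d ^ 2 := by
      field_simp; ring
    have h1 : (η * g ^ 2) * (L * η / 2 + (lam - 1) * d) / d ^ 2 ≤ 0 := by
      apply div_nonpos_of_nonpos_of_nonneg _ (sq_nonneg d)
      apply mul_nonpos_of_nonneg_of_nonpos (by positivity)
      nlinarith [hd i]
    nlinarith [e ▸ h1]
  calc R θη - R θ ≤ ⟪gradient R θ, θη - θ⟫ + L / 2 * ‖θη - θ‖ ^ 2 := hkey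
    _ = ∑ i, (gradient R θ i * (θη i - θ i) + L / 2 * (θη i - θ i) ^ 2) := by
        rw [hinner, hnorm, Finset.mul_sum, ← Finset.sum_add_distrib]
    _ ≤ ∑ i, -(lam * η * ((gradient R θ i) ^ 2 / (ε + Real.sqrt (sη i)))) :=
        Finset.sum_le_sum (fun i _ => hcomp i)
    _ = -(lam * η * ∑ i, (gradient R θ i) ^ 2 / (ε + Real.sqrt (sη i))) := by
        rw [Finset.mul_sum, ← Finset.sum_neg_distrib]
end

section
/- With the RMSProp update θ_{n+1}^i = θ_n^i − η_n ∂_i R(θ_n)/(ε_a + √(s_{n+1}^i)) where s_{n+1} = β_n s_n + (1 − β_n)(∇R(θ_n))², β_n = 1 − β̄η_n, β̄ > 0, 0 < η_n ≤ 1/β̄, ε_a > 0, s_n ≥ 0 componentwise, one has ‖θ_{n+1} − θ_n‖ ≤ √(η_n N / β̄). -/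
theorem rmsprop_step_bound (N : ℕ) (R : EuclideanSpace ℝ (Fin N) → ℝ)
    (hR : Differentiable ℝ R)
    (βb ε η : ℝ) (hβ : 0 < βb) (hη : 0 < η) (hη1 : η ≤ 1 / βb) (hε : 0 < ε)
    (θn θn1 : EuclideanSpace ℝ (Fin N)) (s s' : Fin N → ℝ)
    (hs : ∀ i, 0 ≤ s i)
    (hs' : ∀ i, s' i = (1 - βb * η) * s i + (βb * η) * (gradient R θn i) ^ 2)
    (hθ : ∀ i, θn1 i = θn i - η * gradient R θn i / (ε + Real.sqrt (s' i))) :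
    ‖θn1 - θn‖ ≤ Real.sqrt (η * N / βb) := by
  have hβη : 0 < βb * η := mul_pos hβ hη
  have h1 : βb * η ≤ 1 := by
    rw [le_div_iff₀ hβ] at hη1; linarith
  have key : ∀ i, |θn1 i - θn i| ≤ Real.sqrt (η / βb) := by
    intro i
    set g := gradient R θn i with hg
    have hs'i : βb * η * g ^ 2 ≤ s' i := by
      rw [hs' i]
      nlinarith [hs i, sq_nonneg g]
    have hs'nn : 0 ≤ s' i := le_trans (by positivity) hs'i
    have hsq : Real.sqrt (βb * η) * |g| ≤ Real.sqrt (s' i) := by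
      calc Real.sqrt (βb * η) * |g| = Real.sqrt (βb * η * g ^ 2) := by
            rw [Real.sqrt_mul hβη.le, Real.sqrt_sq_eq_abs]
        _ ≤ _ := Real.sqrt_le_sqrt hs'i
    have hden : 0 < ε + Real.sqrt (s' i) := by positivity
    have heq : θn1 i - θn i = -(η * g / (ε + Real.sqrt (s' i))) := by
      rw [hθ i]; ring
    rw [heq, abs_neg, abs_div, abs_of_pos hden, abs_mul, abs_of_pos hη,
      div_le_iff₀ hden]
    have hprod : Real.sqrt (η / βb) * Real.sqrt (βb * η) = η := by
      rw [← Real.sqrt_mul (by positivity)]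
      rw [show η / βb * (βb * η) = η ^ 2 by field_simp]
      exact Real.sqrt_sq hη.le
    calc η * |g| = Real.sqrt (η / βb) * (Real.sqrt (βb * η) * |g|) := by
          rw [← mul_assoc, hprod]
      _ ≤ Real.sqrt (η / βb) * Real.sqrt (s' i) := by
          apply mul_le_mul_of_nonneg_left hsq (Real.sqrt_nonneg _)
      _ ≤ Real.sqrt (η / βb) * (ε + Real.sqrt (s' i)) := by
          apply mul_le_mul_of_nonneg_left _ (Real.sqrt_nonneg _)
          linarith
  rw [EuclideanSpace.norm_eq]
  have hbound : ∑ i : Fin N, ‖(θn1 - θn) i‖ ^ 2 ≤ N * (η / βb) := by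
    calc ∑ i : Fin N, ‖(θn1 - θn) i‖ ^ 2 ≤ ∑ _i : Fin N, (η / βb) := by
          apply Finset.sum_le_sum
          intro i _
          have : (θn1 - θn) i = θn1 i - θn i := rfl
          rw [this, Real.norm_eq_abs]
          calc |θn1 i - θn i| ^ 2 ≤ Real.sqrt (η / βb) ^ 2 := by
                apply sq_le_sq' _ (key i)
                linarith [abs_nonneg (θn1 i - θn i), key i]
            _ = η / βb := Real.sq_sqrt (by positivity)
      _ = N * (η / βb) := by simp [mul_comm]
  calc Real.sqrt (∑ i : Fin N, ‖(θn1 - θn) i‖ ^ 2)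
      ≤ Real.sqrt (N * (η / βb)) := Real.sqrt_le_sqrt hbound
    _ = Real.sqrt (η * N / βb) := by ring_nf
end

section
/- Let R : ℝ^N → ℝ be differentiable with L-Lipschitz gradient, and let β̄ ≥ 1, 0 < λ < 1/(2β̄). Then there exists η_o > 0 (depending only on λ, β̄, L) such that for all 0 < η ≤ η_o with η ≤ 1/β̄, and all θ, v ∈ ℝ^N, setting v_η = (1−β̄η)v + η∇R(θ) and θ_η = θ − η v_η, the Lyapunov function V(θ,v) = R(θ) + ‖v‖²/2 satisfies V(θ_η, v_η) − V(θ, v) ≤ −λβ̄η‖v_η‖². -/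
open InnerProductSpace

-- scalar lemma
lemma key_scalar (L βb lam η nv ng C : ℝ) (hL : 0 < L) (hβ : 1 ≤ βb)
    (hlam0 : 0 < lam) (h2lb : 2 * lam * βb < 1) (hη : 0 < η)
    (hηo : η ≤ (1 - 2 * lam) / (2 * L)) (hηβ : βb * η ≤ 1)
    (hnv : 0 ≤ nv) (hng : 0 ≤ ng) (hC1 : C ≤ nv * ng) (hC2 : -(nv * ng) ≤ C) :
    (1/2 + L * η^2 + lam * βb * η) *
      ((1 - βb * η)^2 * nv^2 + 2 * (1 - βb * η) * η * C + η^2 * ng^2)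
      ≤ nv^2 / 2 + (1 - βb * η) * η * C + η^2 * ng^2 := by
  have hlam2 : 2 * lam < 1 := by nlinarith
  have hs0 : 0 ≤ βb * η := by positivity
  have hs1 : 0 ≤ 1 - βb * η := by linarith
  have hW : 0 ≤ (1 - βb * η)^2 * nv^2 + 2 * (1 - βb * η) * η * C + η^2 * ng^2 := by
    nlinarith [sq_nonneg ((1 - βb * η) * nv - η * ng), mul_nonneg (mul_nonneg hs1 hη.le) (by nlinarith : 0 ≤ nv * ng + C)]
  have hcoef : 0 ≤ βb * η / 2 - L * η^2 - lam * βb * η := by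
    have h2 : η * (2 * L) ≤ 1 - 2 * lam := (le_div_iff₀ (by positivity)).mp hηo
    nlinarith [mul_le_mul_of_nonneg_right h2 hη.le,
      mul_nonneg (by linarith : (0:ℝ) ≤ βb - 1) (by linarith : (0:ℝ) ≤ 1 - 2 * lam),
      mul_pos hη hη]
  nlinarith [mul_nonneg hcoef hW,
    mul_nonneg hs1 (sq_nonneg (η * ng - βb * η * nv)),
    mul_nonneg (mul_nonneg (mul_nonneg hs0 hs1) hη.le) (by nlinarith : 0 ≤ nv * ng - C),
    mul_nonneg hs0 (sq_nonneg nv)]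

lemma descent_lemma_s14 {N : ℕ} (R : EuclideanSpace ℝ (Fin N) → ℝ)
    (hR : Differentiable ℝ R) (L : ℝ) (hL : 0 < L)
    (hLip : ∀ x y, ‖gradient R x - gradient R y‖ ≤ L * ‖x - y‖)
    (x y : EuclideanSpace ℝ (Fin N)) :
    R y - R x ≤ ⟪gradient R x, y - x⟫_ℝ + L * ‖y - x‖^2 := by
  have hfd : ∀ z, fderiv ℝ R z = toDual ℝ _ (gradient R z) := by
    intro z
    simp [gradient]
  have key : ‖R y - R x - (fderiv ℝ R x) (y - x)‖ ≤ (L * ‖y - x‖) * ‖y - x‖ := by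
    apply Convex.norm_image_sub_le_of_norm_fderiv_le'
      (fun z _ => hR z) _ (convex_closedBall x ‖y - x‖)
    · exact Metric.mem_closedBall_self (norm_nonneg _)
    · simp [Metric.mem_closedBall, dist_eq_norm]
    · intro z hz
      rw [hfd z, hfd x, ← map_sub, LinearIsometryEquiv.norm_map]
      calc ‖gradient R z - gradient R x‖ ≤ L * ‖z - x‖ := hLip z x
        _ ≤ L * ‖y - x‖ := by
            have : ‖z - x‖ ≤ ‖y - x‖ := by rw [← dist_eq_norm]; exact hz
            nlinarith
  have hin : (fderiv ℝ R x) (y - x) = ⟪gradient R x, y - x⟫_ℝ := by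
    rw [hfd x]; simp [InnerProductSpace.toDual_apply_apply]
  rw [hin] at key
  have h2 : R y - R x - ⟪gradient R x, y - x⟫_ℝ ≤ L * ‖y - x‖ * ‖y - x‖ :=
    le_trans (le_abs_self _) (by rw [← Real.norm_eq_abs]; exact key)
  rw [pow_two]; linarith [h2]

theorem momentum_dissipation (N : ℕ) (R : EuclideanSpace ℝ (Fin N) → ℝ)
    (hR : Differentiable ℝ R) (L : ℝ) (hL : 0 < L)
    (hLip : ∀ x y, ‖gradient R x - gradient R y‖ ≤ L * ‖x - y‖)
    (βb lam : ℝ) (hβ : 1 ≤ βb) (hlam0 : 0 < lam) (hlam : lam < 1 / (2 * βb)) :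
    ∃ ηo > 0, ∀ η, 0 < η → η ≤ ηo → η ≤ 1 / βb →
      ∀ θ v vη θη : EuclideanSpace ℝ (Fin N),
        vη = (1 - βb * η) • v + η • gradient R θ →
        θη = θ - η • vη →
        (R θη + ‖vη‖ ^ 2 / 2) - (R θ + ‖v‖ ^ 2 / 2) ≤ -(lam * βb * η * ‖vη‖ ^ 2) := by
  have hβ0 : (0:ℝ) < βb := by linarith
  have h2lb : 2 * lam * βb < 1 := by
    have := (lt_div_iff₀ (by positivity)).mp hlam
    nlinarith
  have hlam2 : 2 * lam < 1 := by nlinarith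
  refine ⟨(1 - 2 * lam) / (2 * L), div_pos (by linarith) (by linarith), ?_⟩
  intro η hη hηo hηβ θ v vη θη hv hθ
  set g := gradient R θ with hg
  set a := 1 - βb * η with ha
  have hβη : βb * η ≤ 1 := by
    rw [le_div_iff₀ hβ0] at hηβ; linarith
  -- expansions
  have e1 : ‖vη‖ ^ 2 = a^2 * ‖v‖^2 + 2 * a * η * ⟪v, g⟫_ℝ + η^2 * ‖g‖^2 := by
    rw [hv, norm_add_sq_real, norm_smul, norm_smul, real_inner_smul_left,
      real_inner_smul_right]
    simp [Real.norm_eq_abs, mul_pow, sq_abs]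
    ring
  have e2 : ⟪g, vη⟫_ℝ = a * ⟪v, g⟫_ℝ + η * ‖g‖^2 := by
    rw [hv, inner_add_right, real_inner_smul_right, real_inner_smul_right,
      real_inner_self_eq_norm_sq, real_inner_comm]
  -- descent
  have hd : R θη - R θ ≤ -(η * ⟪g, vη⟫_ℝ) + L * η^2 * ‖vη‖^2 := by
    have := descent_lemma_s14 R hR L hL hLip θ θη
    have h1 : θη - θ = -(η • vη) := by rw [hθ]; abel
    rw [h1, inner_neg_right, real_inner_smul_right, norm_neg, norm_smul] at this
    calc R θη - R θ ≤ -(η * ⟪g, vη⟫_ℝ) + L * (‖η‖ * ‖vη‖)^2 := this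
      _ = -(η * ⟪g, vη⟫_ℝ) + L * η^2 * ‖vη‖^2 := by
          rw [Real.norm_eq_abs, mul_pow, sq_abs]; ring
  have hkey := key_scalar L βb lam η ‖v‖ ‖g‖ ⟪v, g⟫_ℝ hL hβ hlam0 h2lb hη hηo hβη
    (norm_nonneg v) (norm_nonneg g) (real_inner_le_norm v g)
    (by linarith [neg_abs_le ⟪v, g⟫_ℝ, abs_real_inner_le_norm v g])
  rw [← ha] at hkey
  rw [e1, e2] at hd
  rw [e1]
  clear_value g a
  nlinarith [hd, hkey]
end

section
/- Backtracking complexity bound: suppose at iteration 0 the linesearch starts at 1/β̄ and performs p_0 + 1 function evaluations with η_0 = 1/(β̄ f_1^{p_0}), and at each iteration n ≥ 1 it starts at min(f_2 η_{n−1}, 1/β̄) and performs p_n + 1 evaluations with η_n = min(f_2 η_{n−1}, 1/β̄)/f_1^{p_n}, where f_1, f_2 > 1. If η_n ≥ η* > 0 for all n, then the total number of evaluations C_n = 1 + Σ_{k=0}^n (p_k + 1) satisfies C_n ≤ [1 + log(f_2)/log(f_1)]·n + log(f_1²/(β̄η*))/log(f_1). -/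
theorem backtracking_complexity (f1 f2 βb ηstar : ℝ) (p : ℕ → ℕ) (η : ℕ → ℝ)
    (hf1 : 1 < f1) (hf2 : 1 < f2) (hβ : 0 < βb) (hstar : 0 < ηstar)
    (hη0 : η 0 = 1 / (βb * f1 ^ (p 0)))
    (hηn : ∀ n, 1 ≤ n → η n = min (f2 * η (n - 1)) (1 / βb) / f1 ^ (p n))
    (hlb : ∀ n, ηstar ≤ η n) (n : ℕ)
    (C : ℕ → ℕ) (hC : ∀ m, C m = 1 + ∑ k ∈ Finset.range (m + 1), (p k + 1)) :
    (C n : ℝ) ≤ (1 + Real.log f2 / Real.log f1) * n +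
      Real.log (f1 ^ 2 / (βb * ηstar)) / Real.log f1 := by
  have hf1' : (0:ℝ) < f1 := lt_trans one_pos hf1
  have hf2' : (0:ℝ) < f2 := lt_trans one_pos hf2
  have hlogf1 : 0 < Real.log f1 := Real.log_pos hf1
  have hηpos : ∀ m, 0 < η m := fun m => lt_of_lt_of_le hstar (hlb m)
  have key : ∀ m, (∑ k ∈ Finset.range (m+1), (p k : ℝ)) * Real.log f1 ≤
      m * Real.log f2 - Real.log βb - Real.log (η m) := by
    intro m
    induction m with
    | zero =>
      have hlog : Real.log (η 0) = -(Real.log βb + (p 0 : ℝ) * Real.log f1) := by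
        rw [hη0, one_div, Real.log_inv, Real.log_mul (ne_of_gt hβ) (by positivity),
          Real.log_pow]
      simp only [zero_add, Finset.sum_range_one, Nat.cast_zero, zero_mul, zero_sub]
      linarith [hlog]
    | succ k ih =>
      rw [Finset.sum_range_succ]
      have hrec := hηn (k+1) (by omega)
      simp only [Nat.add_sub_cancel] at hrec
      have hle : η (k+1) * f1 ^ (p (k+1)) ≤ f2 * η k := by
        rw [hrec, div_mul_cancel₀ _ (by positivity)]
        exact min_le_left _ _
      have hlogle : Real.log (η (k+1)) + (p (k+1) : ℝ) * Real.log f1 ≤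
          Real.log f2 + Real.log (η k) := by
        have := Real.log_le_log (mul_pos (hηpos (k+1)) (by positivity)) hle
        rwa [Real.log_mul (ne_of_gt (hηpos (k+1))) (by positivity),
          Real.log_mul (ne_of_gt hf2') (ne_of_gt (hηpos k)), Real.log_pow] at this
      push_cast
      nlinarith [ih, hlogle]
  have hS : (∑ k ∈ Finset.range (n+1), (p k : ℝ)) * Real.log f1 ≤
      n * Real.log f2 - Real.log βb - Real.log ηstar := by
    have := Real.log_le_log hstar (hlb n)
    linarith [key n]
  have hRHS : Real.log (f1 ^ 2 / (βb * ηstar)) =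
      2 * Real.log f1 - (Real.log βb + Real.log ηstar) := by
    rw [Real.log_div (by positivity) (by positivity), Real.log_pow,
      Real.log_mul (ne_of_gt hβ) (ne_of_gt hstar)]
    push_cast; ring
  rw [hC n, hRHS]
  push_cast
  rw [Finset.sum_add_distrib, Finset.sum_const, Finset.card_range]
  rw [← mul_le_mul_iff_of_pos_right hlogf1]
  have hne := ne_of_gt hlogf1
  field_simp
  ring_nf
  ring_nf at hS
  nlinarith [hS, hlogf1]
end
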